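/- With notation as above (g in O(q+r,p) in block form, Z with ᵀZ·Z < 1_p, j(g,Z) := C·Z + D, and gZ := (A·Z+B)·(C·Z+D)⁻¹), one has the identity 1_p − ᵀZ·Z = ᵀj(g,Z) · (1_p − ᵀ(gZ)·(gZ)) · j(g,Z). -/
import Mathlib


open Matrix

/-- Transformation rule of the defect matrix `1 − ᵀZ·Z` under the fractional linear
action of `O(q+r,p)`: `1 − ᵀZZ = ᵀj(g,Z)·(1 − ᵀ(gZ)(gZ))·j(g,Z)` with `j(g,Z) = C·Z+D`. -/
theorem stmt_6 (p q r : ℕ)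
    (A : Matrix (Fin (q + r)) (Fin (q + r)) ℝ) (B : Matrix (Fin (q + r)) (Fin p) ℝ)
    (C : Matrix (Fin p) (Fin (q + r)) ℝ) (D : Matrix (Fin p) (Fin p) ℝ)
    (hg : (fromBlocks A B C D)ᵀ *
        fromBlocks (1 : Matrix (Fin (q + r)) (Fin (q + r)) ℝ) 0 0
          (-(1 : Matrix (Fin p) (Fin p) ℝ)) * fromBlocks A B C D =
      fromBlocks (1 : Matrix (Fin (q + r)) (Fin (q + r)) ℝ) 0 0
        (-(1 : Matrix (Fin p) (Fin p) ℝ)))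
    (Z : Matrix (Fin (q + r)) (Fin p) ℝ)
    (hZ : ((1 : Matrix (Fin p) (Fin p) ℝ) - Zᵀ * Z).PosDef) :
    (1 : Matrix (Fin p) (Fin p) ℝ) - Zᵀ * Z =
      (C * Z + D)ᵀ *
        ((1 : Matrix (Fin p) (Fin p) ℝ) -
          ((A * Z + B) * (C * Z + D)⁻¹)ᵀ * ((A * Z + B) * (C * Z + D)⁻¹)) *
        (C * Z + D) := by
  rw [fromBlocks_transpose] at hg
  simp only [fromBlocks_multiply, Matrix.mul_one, Matrix.mul_zero, Matrix.zero_mul,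
    Matrix.mul_neg, Matrix.one_mul, add_zero, zero_add, Matrix.neg_mul] at hg
  rw [fromBlocks_inj] at hg
  obtain ⟨h1, h2, h3, h4⟩ := hg
  set W := C * Z + D with hWdef
  set M := A * Z + B with hMdef
  -- the key algebraic identity: ᵀW·W = ᵀM·M + (1 − ᵀZ·Z)
  have key : Wᵀ * W = Mᵀ * M + (1 - Zᵀ * Z) := by
    have e1 : Aᵀ * A = 1 + Cᵀ * C := by rw [← h1]; abel
    have e2 : Aᵀ * B = Cᵀ * D := by rw [← sub_eq_zero, sub_eq_add_neg, h2]
    have e3 : Bᵀ * A = Dᵀ * C := by rw [← sub_eq_zero, sub_eq_add_neg, h3]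
    have e4 : Dᵀ * D = 1 + Bᵀ * B := by
      have h4' := h4
      rw [add_neg_eq_iff_eq_add] at h4'
      rw [h4']; abel
    have f1 : Aᵀ * (A * Z) = Z + Cᵀ * (C * Z) := by
      rw [← Matrix.mul_assoc, e1, Matrix.add_mul, Matrix.one_mul, Matrix.mul_assoc]
    have f3 : Bᵀ * (A * Z) = Dᵀ * (C * Z) := by
      rw [← Matrix.mul_assoc, e3, Matrix.mul_assoc]
    rw [hWdef, hMdef]
    simp only [transpose_add, transpose_mul, Matrix.add_mul, Matrix.mul_add,
      Matrix.mul_assoc, f1, f3, e2, e4]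
    abel
  -- hence ᵀW·W is positive definite, so W is invertible
  have hMM : (Mᵀ * M).PosSemidef := by
    have := Matrix.posSemidef_conjTranspose_mul_self M
    simpa using this
  have hWW : (Wᵀ * W).PosDef := by
    rw [key]; exact Matrix.PosDef.posSemidef_add hMM hZ
  have hdet : IsUnit W.det := by
    have hpos : 0 < (Wᵀ * W).det := hWW.det_pos
    rw [Matrix.det_mul, Matrix.det_transpose] at hpos
    have : W.det ≠ 0 := by
      intro h; rw [h] at hpos; simp at hpos
    exact this.isUnit
  have hdetT : IsUnit Wᵀ.det := by rwa [Matrix.det_transpose]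
  -- now unfold the right-hand side
  have hinv : (W⁻¹)ᵀ = (Wᵀ)⁻¹ := Matrix.transpose_nonsing_inv W
  rw [Matrix.mul_sub, Matrix.mul_one, Matrix.sub_mul, transpose_mul, hinv]
  have hmid : Wᵀ * ((Wᵀ)⁻¹ * Mᵀ * (M * W⁻¹)) * W = Mᵀ * M := by
    rw [← Matrix.mul_assoc, ← Matrix.mul_assoc, ← Matrix.mul_assoc,
      Matrix.mul_nonsing_inv _ hdetT, Matrix.one_mul, Matrix.mul_assoc,
      Matrix.mul_assoc, Matrix.nonsing_inv_mul _ hdet, Matrix.mul_one]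
  rw [hmid, key]
  abel
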